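/- (Birman–Schwinger principle) Let d ≥ 1 and let H₀ and V be bounded positive (i.e. self-adjoint and nonnegative) operators on ℓ²(ℤ^d;ℂ), with V compact. For μ < 0, the operator H₀ − μ·1 is boundedly invertible, and the Birman–Schwinger operator B(μ) := V^{1/2}(H₀ − μ)⁻¹V^{1/2} (with V^{1/2} the positive square root of V) is a compact, self-adjoint, positive operator. Then for every μ < 0 and every M ∈ ℕ: μ is an eigenvalue of H₀ − V whose eigenspace has dimension M if and only if 1 is an eigenvalue of B(μ) whose eigenspace has dimension M. -/

import Mathlib

open MeasureTheory

noncomputable section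

/-- The Hilbert space `ℓ²(ℤ^d; ℂ)`. -/
abbrev lpZ (d : ℕ) := lp (fun _ : Fin d → ℤ => ℂ) 2

section Aux

open ContinuousLinearMap RCLike
open scoped InnerProductSpace

variable {E : Type*} [NormedAddCommGroup E] [InnerProductSpace ℂ E] [CompleteSpace E]

local notation "⟪" x ", " y "⟫" => @inner ℂ _ _ x y

/-- square root of a compact positive operator is compact -/
lemma aux_sqrt_compact {V W : E →L[ℂ] E} (hW : W.IsPositive) (hWsq : W ∘L W = V)
    (hVcompact : IsCompactOperator V) : IsCompactOperator W := by
  classical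
  have hWsym : (W : E →ₗ[ℂ] E).IsSymmetric := hW.1
  -- key inequality : ‖W z‖^2 ≤ ‖V z‖ * ‖z‖
  have key : ∀ z : E, ‖W z‖ ^ 2 ≤ ‖V z‖ * ‖z‖ := by
    intro z
    have h1 : re ⟪V z, z⟫ = ‖W z‖ ^ 2 := by
      rw [← hWsq]
      have : ⟪(W ∘L W) z, z⟫ = ⟪W z, W z⟫ := by
        rw [comp_apply]
        exact hWsym (W z) z
      rw [this, inner_self_eq_norm_sq]
    calc ‖W z‖ ^ 2 = re ⟪V z, z⟫ := h1.symm
      _ ≤ ‖⟪V z, z⟫‖ := RCLike.re_le_norm _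
      _ ≤ ‖V z‖ * ‖z‖ := norm_inner_le_norm _ _
  -- total boundedness of the image of the unit ball
  obtain ⟨K, hK, hVK⟩ := hVcompact.image_closedBall_subset_compact 1
  have hVTB : TotallyBounded (V '' Metric.closedBall 0 1) := hK.totallyBounded.subset hVK
  have hTB : TotallyBounded (W '' Metric.closedBall (0 : E) 1) := by
    rw [Metric.totallyBounded_iff]
    intro ε hε
    obtain ⟨t, htfin, hcover⟩ := Metric.totallyBounded_iff.mp hVTB (ε ^ 2 / 4) (by positivity)
    -- choose near-preimages for each center
    have hch : ∀ y : E, ∃ x : E,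
        (∃ z ∈ Metric.closedBall (0 : E) 1, V z ∈ Metric.ball y (ε ^ 2 / 4)) →
        x ∈ Metric.closedBall (0 : E) 1 ∧ V x ∈ Metric.ball y (ε ^ 2 / 4) := by
      intro y
      by_cases h : ∃ z ∈ Metric.closedBall (0 : E) 1, V z ∈ Metric.ball y (ε ^ 2 / 4)
      · obtain ⟨z, hz1, hz2⟩ := h
        exact ⟨z, fun _ => ⟨hz1, hz2⟩⟩
      · exact ⟨0, fun hc => absurd hc h⟩
    choose g hg using hch
    refine ⟨(fun y => W (g y)) '' t, htfin.image _, ?_⟩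
    rintro _ ⟨x, hx, rfl⟩
    have hVx : V x ∈ ⋃ y ∈ t, Metric.ball y (ε ^ 2 / 4) := hcover ⟨x, hx, rfl⟩
    simp only [Set.mem_iUnion] at hVx
    obtain ⟨y, hy, hVxy⟩ := hVx
    obtain ⟨hg1, hg2⟩ := hg y ⟨x, hx, hVxy⟩
    have hdist : ‖V x - V (g y)‖ < ε ^ 2 / 2 := by
      have h1 : ‖V x - y‖ < ε ^ 2 / 4 := by
        simpa [Metric.mem_ball, dist_eq_norm] using hVxy
      have h2 : ‖V (g y) - y‖ < ε ^ 2 / 4 := by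
        simpa [Metric.mem_ball, dist_eq_norm] using hg2
      calc ‖V x - V (g y)‖ = ‖(V x - y) - (V (g y) - y)‖ := by rw [sub_sub_sub_cancel_right]
        _ ≤ ‖V x - y‖ + ‖V (g y) - y‖ := norm_sub_le _ _
        _ < ε ^ 2 / 4 + ε ^ 2 / 4 := by linarith
        _ = ε ^ 2 / 2 := by ring
    have hxgy : ‖x - g y‖ ≤ 2 := by
      have h1 : ‖x‖ ≤ 1 := by simpa [Metric.mem_closedBall, dist_eq_norm] using hx
      have h2 : ‖g y‖ ≤ 1 := by simpa [Metric.mem_closedBall, dist_eq_norm] using hg1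
      calc ‖x - g y‖ ≤ ‖x‖ + ‖g y‖ := norm_sub_le _ _
        _ ≤ 2 := by linarith
    have hsq : ‖W x - W (g y)‖ ^ 2 < ε ^ 2 := by
      have := key (x - g y)
      rw [map_sub, map_sub] at this
      calc ‖W x - W (g y)‖ ^ 2 ≤ ‖V x - V (g y)‖ * ‖x - g y‖ := this
        _ ≤ ‖V x - V (g y)‖ * 2 := by
            apply mul_le_mul_of_nonneg_left hxgy (norm_nonneg _)
        _ < ε ^ 2 := by linarith
    have hlt : ‖W x - W (g y)‖ < ε :=
      lt_of_pow_lt_pow_left₀ 2 hε.le hsq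
    simp only [Set.mem_iUnion]
    exact ⟨W (g y), ⟨y, hy, rfl⟩, by simpa [Metric.mem_ball, dist_eq_norm] using hlt⟩
  refine ⟨closure (W '' Metric.closedBall (0 : E) 1), ?_, ?_⟩
  · exact hTB.closure.isCompact_of_isClosed isClosed_closure
  · exact Filter.mem_of_superset (Metric.closedBall_mem_nhds 0 one_pos)
      fun x hx => subset_closure ⟨x, hx, rfl⟩

lemma aux_birman_schwinger
    (H₀ V : E →L[ℂ] E)
    (hH₀ : H₀.IsPositive) (hV : V.IsPositive) (hVcompact : IsCompactOperator V)
    (W : E →L[ℂ] E) (hW : W.IsPositive) (hWsq : W ∘L W = V)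
    (μ : ℝ) (hμ : μ < 0) :
    IsUnit (H₀ - (μ : ℂ) • (1 : E →L[ℂ] E)) ∧
    IsCompactOperator
      (W ∘L Ring.inverse (H₀ - (μ : ℂ) • (1 : E →L[ℂ] E)) ∘L W) ∧
    IsSelfAdjoint (W ∘L Ring.inverse (H₀ - (μ : ℂ) • (1 : E →L[ℂ] E)) ∘L W) ∧
    (W ∘L Ring.inverse (H₀ - (μ : ℂ) • (1 : E →L[ℂ] E)) ∘L W).IsPositive ∧
    ∀ M : ℕ,
      (Module.End.HasEigenvalue (↑(H₀ - V) : E →ₗ[ℂ] E) (μ : ℂ) ∧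
        Module.rank ℂ
          (Module.End.eigenspace (↑(H₀ - V) : E →ₗ[ℂ] E) (μ : ℂ)) = M) ↔
      (Module.End.HasEigenvalue
          (↑(W ∘L Ring.inverse (H₀ - (μ : ℂ) • (1 : E →L[ℂ] E)) ∘L W) : E →ₗ[ℂ] E) 1 ∧
        Module.rank ℂ
          (Module.End.eigenspace
            (↑(W ∘L Ring.inverse (H₀ - (μ : ℂ) • (1 : E →L[ℂ] E)) ∘L W) : E →ₗ[ℂ] E) 1) = M) := by
  set A : E →L[ℂ] E := H₀ - (μ : ℂ) • 1 with hAdef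
  have hμ1 : IsSelfAdjoint ((μ : ℂ) • (1 : E →L[ℂ] E)) := by
    rw [IsSelfAdjoint, star_smul, star_one, Complex.star_def, Complex.conj_ofReal]
  have hAsa : IsSelfAdjoint A := hH₀.isSelfAdjoint.sub hμ1
  have hAapp : ∀ x : E, A x = H₀ x - (μ : ℂ) • x := by
    intro x; simp [hAdef, sub_apply, smul_apply, one_apply]
  have hAinner : ∀ x : E, re ⟪A x, x⟫ = re ⟪H₀ x, x⟫ + (-μ) * ‖x‖ ^ 2 := by
    intro x
    rw [hAapp, inner_sub_left, inner_smul_left, map_sub, Complex.conj_ofReal]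
    have h2 : re ((μ : ℂ) * ⟪x, x⟫) = μ * re ⟪x, x⟫ := by
      simp [RCLike.re_to_complex]
    rw [h2, inner_self_eq_norm_sq]
    ring
  have hcpos : (0 : ℝ) < -μ := by linarith
  have hA : IsUnit A := by
    refine isUnit_of_forall_le_norm_inner_map A (c := ⟨-μ, hcpos.le⟩) ?_ ?_
    · exact_mod_cast hcpos
    · intro x
      calc ‖x‖ ^ 2 * (⟨-μ, hcpos.le⟩ : NNReal) ≤ re ⟪A x, x⟫ := by
            rw [hAinner]
            have := hH₀.re_inner_nonneg_left x
            push_cast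
            nlinarith [sq_nonneg ‖x‖]
        _ ≤ ‖⟪A x, x⟫‖ := RCLike.re_le_norm _
  set R : E →L[ℂ] E := Ring.inverse A with hRdef
  have hRA : ∀ x : E, R (A x) = x := by
    intro x
    have h := Ring.inverse_mul_cancel A hA
    have := DFunLike.congr_fun h x
    simpa [ContinuousLinearMap.mul_apply] using this
  have hAR : ∀ x : E, A (R x) = x := by
    intro x
    have h := Ring.mul_inverse_cancel A hA
    have := DFunLike.congr_fun h x
    simpa [ContinuousLinearMap.mul_apply] using this
  have hRsa : IsSelfAdjoint R := by
    rw [IsSelfAdjoint, hRdef, ← Ring.inverse_star, hAsa.star_eq]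
  have hRpos : R.IsPositive := by
    refine ⟨hRsa.isSymmetric, fun x => ?_⟩
    rw [reApplyInnerSelf]
    have hx : A (R x) = x := hAR x
    set y := R x with hy
    calc (0:ℝ) ≤ re ⟪A y, y⟫ := by
          rw [hAinner]
          have := hH₀.re_inner_nonneg_left y
          nlinarith [sq_nonneg ‖y‖]
      _ = re ⟪y, A y⟫ := (inner_re_symm _ _).symm
      _ = re ⟪y, x⟫ := by rw [hx]
  have hWadj : ContinuousLinearMap.adjoint W = W := by
    rw [← ContinuousLinearMap.star_eq_adjoint, hW.isSelfAdjoint.star_eq]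
  have hBpos : (W ∘L R ∘L W).IsPositive := by
    have := hRpos.conj_adjoint W
    rwa [hWadj] at this
  have hWcompact : IsCompactOperator W := aux_sqrt_compact hW hWsq hVcompact
  have hBcompact : IsCompactOperator (W ∘L R ∘L W) := by
    have h1 : IsCompactOperator (⇑W ∘ ⇑(R ∘L W)) := hWcompact.comp_clm (R ∘L W)
    have : ⇑(W ∘L R ∘L W) = ⇑W ∘ ⇑(R ∘L W) := by
      ext x; simp [comp_apply]
    rwa [this]
  refine ⟨hA, hBcompact, hBpos.isSelfAdjoint, hBpos, ?_⟩
  -- the eigenspace correspondence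
  set B : E →L[ℂ] E := W ∘L R ∘L W with hBdef
  have hWW : ∀ x : E, W (W x) = V x := by
    intro x; rw [← hWsq]; rfl
  have hBapp : ∀ x : E, B x = W (R (W x)) := by intro x; rfl
  set E₁ := Module.End.eigenspace (↑(H₀ - V) : E →ₗ[ℂ] E) (μ : ℂ) with hE₁
  set E₂ := Module.End.eigenspace (↑B : E →ₗ[ℂ] E) 1 with hE₂
  have hmemE₁ : ∀ x : E, x ∈ E₁ ↔ H₀ x - V x = (μ : ℂ) • x := by
    intro x
    rw [hE₁, Module.End.mem_eigenspace_iff]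
    simp [ContinuousLinearMap.coe_coe, sub_apply]
  have hmemE₂ : ∀ y : E, y ∈ E₂ ↔ B y = y := by
    intro y
    rw [hE₂, Module.End.mem_eigenspace_iff]
    simp [ContinuousLinearMap.coe_coe]
  -- forward
  have hfwd : ∀ x : E, x ∈ E₁ → W x ∈ E₂ := by
    intro x hx
    rw [hmemE₁] at hx
    rw [hmemE₂, hBapp, hWW]
    have hAV : A x = V x := by
      rw [hAapp]
      have : V x = H₀ x - (μ:ℂ) • x := by rw [← hx]; abel
      rw [this]
    rw [← hAV, hRA]
  have hinj : ∀ x : E, x ∈ E₁ → W x = 0 → x = 0 := by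
    intro x hx hWx
    rw [hmemE₁] at hx
    have hVx : V x = 0 := by rw [← hWW, hWx, map_zero]
    have hAx : A x = 0 := by
      rw [hAapp]
      rw [hVx, sub_zero] at hx
      rw [hx, sub_self]
    have := hRA x
    rw [hAx, map_zero] at this
    exact this.symm
  have hbwd : ∀ y : E, y ∈ E₂ → R (W y) ∈ E₁ ∧ W (R (W y)) = y := by
    intro y hy
    rw [hmemE₂, hBapp] at hy
    refine ⟨?_, hy⟩
    rw [hmemE₁]
    set x := R (W y) with hx
    have hAx : A x = W y := hAR (W y)
    have hVx : V x = W y := by rw [← hWW, hy]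
    have := hAapp x
    rw [hAx] at this
    rw [hVx, this]
    abel
  -- the linear equivalence
  have hmaps : ∀ x ∈ E₁, (↑W : E →ₗ[ℂ] E) x ∈ E₂ := by
    intro x hx; exact hfwd x hx
  let φ : E₁ →ₗ[ℂ] E₂ := (↑W : E →ₗ[ℂ] E).restrict hmaps
  have hφinj : Function.Injective φ := by
    intro x y hxy
    apply Subtype.ext
    have h1 : W (x : E) = W (y : E) := congrArg Subtype.val hxy
    have h2 : W ((x : E) - (y : E)) = 0 := by rw [map_sub, h1, sub_self]
    have h3 : (x : E) - (y : E) ∈ E₁ := sub_mem x.2 y.2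
    have := hinj _ h3 h2
    exact sub_eq_zero.mp this
  have hφsurj : Function.Surjective φ := by
    intro y
    obtain ⟨hmem, hWy⟩ := hbwd (y : E) y.2
    refine ⟨⟨R (W (y : E)), hmem⟩, ?_⟩
    apply Subtype.ext
    exact hWy
  let e : E₁ ≃ₗ[ℂ] E₂ := LinearEquiv.ofBijective φ ⟨hφinj, hφsurj⟩
  have hrank : Module.rank ℂ E₁ = Module.rank ℂ E₂ := e.rank_eq
  have hbot : E₁ ≠ ⊥ ↔ E₂ ≠ ⊥ := by
    constructor
    · intro h
      obtain ⟨x, hx, hx0⟩ := Submodule.exists_mem_ne_zero_of_ne_bot h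
      refine Submodule.ne_bot_iff E₂ |>.mpr ⟨W x, hfwd x hx, ?_⟩
      intro hWx
      exact hx0 (hinj x hx hWx)
    · intro h
      obtain ⟨y, hy, hy0⟩ := Submodule.exists_mem_ne_zero_of_ne_bot h
      obtain ⟨hmem, hWy⟩ := hbwd y hy
      refine Submodule.ne_bot_iff E₁ |>.mpr ⟨R (W y), hmem, ?_⟩
      intro h0
      rw [h0, map_zero] at hWy
      exact hy0 hWy.symm
  intro M
  rw [Module.End.hasEigenvalue_iff, Module.End.hasEigenvalue_iff]
  constructor
  · rintro ⟨h1, h2⟩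
    exact ⟨hbot.mp h1, by rw [← hrank]; exact h2⟩
  · rintro ⟨h1, h2⟩
    exact ⟨hbot.mpr h1, by rw [hrank]; exact h2⟩

end Aux

/-- Birman–Schwinger principle.  Let `H₀, V` be bounded positive operators on
`ℓ²(ℤ^d;ℂ)` with `V` compact, and let `W = V^{1/2}` be the positive square root of `V`
(characterized by `W ≥ 0` and `W ∘ W = V`).  Then for `μ < 0` the operator `H₀ − μ` is boundedly
invertible, the Birman–Schwinger operator `B(μ) = V^{1/2}(H₀ − μ)⁻¹V^{1/2}` is compact,
self-adjoint and positive, and `μ` is an eigenvalue of `H₀ − V` with `M`-dimensional eigenspace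
iff `1` is an eigenvalue of `B(μ)` with `M`-dimensional eigenspace. -/
theorem birman_schwinger_principle
    (d : ℕ) (hd : 1 ≤ d)
    (H₀ V : lpZ d →L[ℂ] lpZ d)
    (hH₀ : H₀.IsPositive) (hV : V.IsPositive) (hVcompact : IsCompactOperator V)
    (W : lpZ d →L[ℂ] lpZ d) (hW : W.IsPositive) (hWsq : W ∘L W = V)
    (μ : ℝ) (hμ : μ < 0) :
    IsUnit (H₀ - (μ : ℂ) • (1 : lpZ d →L[ℂ] lpZ d)) ∧
    IsCompactOperator
      (W ∘L Ring.inverse (H₀ - (μ : ℂ) • (1 : lpZ d →L[ℂ] lpZ d)) ∘L W) ∧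
    IsSelfAdjoint (W ∘L Ring.inverse (H₀ - (μ : ℂ) • (1 : lpZ d →L[ℂ] lpZ d)) ∘L W) ∧
    (W ∘L Ring.inverse (H₀ - (μ : ℂ) • (1 : lpZ d →L[ℂ] lpZ d)) ∘L W).IsPositive ∧
    ∀ M : ℕ,
      (Module.End.HasEigenvalue (↑(H₀ - V) : lpZ d →ₗ[ℂ] lpZ d) (μ : ℂ) ∧
        Module.rank ℂ
          (Module.End.eigenspace (↑(H₀ - V) : lpZ d →ₗ[ℂ] lpZ d) (μ : ℂ)) = M) ↔
      (Module.End.HasEigenvalue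
          (↑(W ∘L Ring.inverse (H₀ - (μ : ℂ) • (1 : lpZ d →L[ℂ] lpZ d)) ∘L W) :
            lpZ d →ₗ[ℂ] lpZ d) 1 ∧
        Module.rank ℂ
          (Module.End.eigenspace
            (↑(W ∘L Ring.inverse (H₀ - (μ : ℂ) • (1 : lpZ d →L[ℂ] lpZ d)) ∘L W) :
              lpZ d →ₗ[ℂ] lpZ d) 1) = M) :=
  aux_birman_schwinger H₀ V hH₀ hV hVcompact W hW hWsq μ hμ
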